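/- Let R = 𝔽_2[x,y]/(y² + xy + y + x³ + x + 1). Then the ideal Q = (x+1, y+1) of R is not principal. -/

import Mathlib

set_option synthInstance.maxHeartbeats 1000000

/-- The defining equation `y² + xy + y + x³ + x + 1` of an affine chart of an ordinary
elliptic curve over `𝔽₂` (with `x = X 0`, `y = X 1`). -/
noncomputable def ellipticEquation : MvPolynomial (Fin 2) (ZMod 2) :=
  (MvPolynomial.X 1) ^ 2 + (MvPolynomial.X 0) * (MvPolynomial.X 1) +
    MvPolynomial.X 1 + (MvPolynomial.X 0) ^ 3 + MvPolynomial.X 0 + 1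

/-- `R = 𝔽₂[x,y]/(y² + xy + y + x³ + x + 1)`, an affine chart of an ordinary elliptic
curve over `𝔽₂`. -/
noncomputable def EllipticChartRing : Type :=
  MvPolynomial (Fin 2) (ZMod 2) ⧸ (Ideal.span {ellipticEquation})

noncomputable instance : CommRing EllipticChartRing :=
  Ideal.Quotient.commRing _

noncomputable section Aux

open Polynomial AdjoinRoot

abbrev Fq := ZMod 2
abbrev Apoly := Polynomial Fq

/-- `f = Y^2 + ((x+1) Y + (x^3+x+1))` over `𝔽₂[x]`. -/
def fpoly : Polynomial Apoly := X ^ 2 + (C (X + 1) * X + C (X ^ 3 + X + 1))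

abbrev Rp := AdjoinRoot fpoly

lemma degree_tail : (C (X + 1) * X + C (X ^ 3 + X + 1) : Polynomial Apoly).degree < 2 := by
  apply lt_of_le_of_lt (degree_add_le _ _)
  rw [max_lt_iff]
  constructor
  · apply lt_of_le_of_lt (degree_mul_le _ _)
    apply lt_of_le_of_lt (add_le_add degree_C_le degree_X_le)
    decide
  · exact lt_of_le_of_lt degree_C_le (by decide)

lemma monic_fpoly : fpoly.Monic := monic_X_pow_add degree_tail

lemma degree_fpoly : fpoly.degree = 2 := by
  unfold fpoly
  rw [degree_add_eq_left_of_degree_lt, degree_X_pow]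
  · rfl
  · rw [degree_X_pow]; exact_mod_cast degree_tail

lemma two_eq_zero_A : (2 : Apoly) = 0 := by
  rw [← map_ofNat (algebraMap Fq Apoly) 2, show (2 : Fq) = 0 from rfl, map_zero]

lemma two_eq_zero_Rp : (2 : Rp) = 0 := by
  rw [← map_ofNat (algebraMap Apoly Rp) 2, two_eq_zero_A, map_zero]

lemma aeval_fpoly (z : Rp) : aeval z fpoly =
    z ^ 2 + (of fpoly X + 1) * z + ((of fpoly X) ^ 3 + of fpoly X + 1) := by
  have h : aeval z fpoly = aeval z (X ^ 2 + (C (X + 1) * X + C (X ^ 3 + X + 1))) := rfl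
  rw [h]
  simp only [map_add, map_pow, map_mul, map_one, aeval_X, aeval_C, AdjoinRoot.algebraMap_eq]
  ring

lemma rel0 : (root fpoly) ^ 2 + (of fpoly X + 1) * root fpoly +
    ((of fpoly X) ^ 3 + of fpoly X + 1) = 0 := by
  have h := aeval_fpoly (root fpoly)
  rw [aeval_eq, mk_self] at h
  linear_combination -h

lemma of_inj : Function.Injective (of fpoly) :=
  of.injective_of_degree_ne_zero (by rw [degree_fpoly]; decide)

/-- Conjugation `root ↦ root + x + 1`. -/
def conj : Rp →ₐ[Apoly] Rp :=
  liftAlgHom fpoly (Algebra.ofId Apoly Rp) (root fpoly + of fpoly X + 1) (by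
    show aeval _ fpoly = 0
    rw [aeval_fpoly]
    linear_combination rel0 + (root fpoly * of fpoly X + root fpoly + (of fpoly X) ^ 2 +
      2 * of fpoly X + 1) * two_eq_zero_Rp)

lemma conj_root : conj (root fpoly) = root fpoly + of fpoly X + 1 := by
  simp [conj]

lemma conj_of (a : Apoly) : conj (of fpoly a) = of fpoly a := by
  have := conj.commutes a
  rwa [AdjoinRoot.algebraMap_eq] at this

/-- Norm formula: `N(a + b·root) = a² + ab(x+1) + b²(x³+x+1)`. -/
lemma norm_formula (a b : Apoly) :
    (of fpoly a + of fpoly b * root fpoly) * conj (of fpoly a + of fpoly b * root fpoly) =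
      of fpoly (a ^ 2 + a * b * (X + 1) + b ^ 2 * (X ^ 3 + X + 1)) := by
  simp only [map_add, map_mul, conj_of, conj_root, map_pow, map_one]
  linear_combination (of fpoly b) ^ 2 * rel0 +
    (of fpoly a * of fpoly b * root fpoly -
      (of fpoly b) ^ 2 * ((of fpoly X) ^ 3 + of fpoly X + 1)) * two_eq_zero_Rp

/-- Every element of `Rp` is `a + b·root`. -/
lemma repr_exists (z : Rp) : ∃ a b : Apoly, z = of fpoly a + of fpoly b * root fpoly := by
  obtain ⟨p, rfl⟩ := mk_surjective z
  refine ⟨(p %ₘ fpoly).coeff 0, (p %ₘ fpoly).coeff 1, ?_⟩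
  have h1 : mk fpoly p = mk fpoly (p %ₘ fpoly) := by
    rw [mk_eq_mk]
    exact ⟨p /ₘ fpoly, by linear_combination -(modByMonic_add_div p fpoly)⟩
  have h2 : p %ₘ fpoly = C ((p %ₘ fpoly).coeff 1) * X + C ((p %ₘ fpoly).coeff 0) :=
    eq_X_add_C_of_degree_le_one (by
      have := degree_modByMonic_lt p monic_fpoly
      rw [degree_fpoly] at this
      exact Order.le_of_lt_succ (by exact_mod_cast this))
  rw [h1]
  nth_rewrite 1 [h2]
  simp only [map_add, map_mul, mk_C, mk_X]
  ring

/-- Evaluation at the point (1,1). -/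
def evalPt : Rp →+* Fq :=
  AdjoinRoot.lift (evalRingHom (1 : Fq)) 1 (by
    simp [fpoly]
    decide)

lemma evalPt_of (a : Apoly) : evalPt (of fpoly a) = a.eval 1 := lift_of _

lemma evalPt_root : evalPt (root fpoly) = 1 := lift_root _

/-- The degree argument: the norm equation `N = x + 1` has no solution. -/
lemma no_solution (a b : Apoly) :
    a ^ 2 + a * b * (X + 1) + b ^ 2 * (X ^ 3 + X + 1) ≠ X + 1 := by
  intro h
  have hX1 : (X + 1 : Apoly).natDegree = 1 := by compute_degree!
  have hC3 : (X ^ 3 + X + 1 : Apoly).natDegree = 3 := by compute_degree!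
  have hX1d : (X + 1 : Apoly).degree = 1 := by compute_degree!
  have hX1ne : (X + 1 : Apoly) ≠ 0 := fun hh => by simp [hh] at hX1d
  have hCne : (X ^ 3 + X + 1 : Apoly) ≠ 0 := fun hh => by
    have := congrArg natDegree hh
    simp [hC3] at this
  rcases eq_or_ne b 0 with hb | hb
  · subst hb
    simp only [mul_zero, zero_mul, ne_eq, OfNat.ofNat_ne_zero, not_false_eq_true,
      zero_pow, add_zero] at h
    have := congrArg natDegree h
    rw [natDegree_pow, hX1] at this
    omega
  rcases eq_or_ne a 0 with ha | ha
  · subst ha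
    simp only [ne_eq, OfNat.ofNat_ne_zero, not_false_eq_true, zero_pow, zero_mul,
      mul_zero, zero_add] at h
    have := congrArg natDegree h
    rw [natDegree_mul (pow_ne_zero _ hb) hCne, natDegree_pow, hX1, hC3] at this
    omega
  have hT2ne : a * b * (X + 1) ≠ 0 := mul_ne_zero (mul_ne_zero ha hb) hX1ne
  have hT3ne : b ^ 2 * (X ^ 3 + X + 1) ≠ 0 := mul_ne_zero (pow_ne_zero _ hb) hCne
  have d1 : (a ^ 2).degree = ((2 * a.natDegree : ℕ) : WithBot ℕ) := by
    rw [degree_eq_natDegree (pow_ne_zero _ ha), natDegree_pow]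
  have d2 : (a * b * (X + 1)).degree = ((a.natDegree + b.natDegree + 1 : ℕ) : WithBot ℕ) := by
    rw [degree_eq_natDegree hT2ne, natDegree_mul (mul_ne_zero ha hb) hX1ne,
      natDegree_mul ha hb, hX1]
  have d3 : (b ^ 2 * (X ^ 3 + X + 1)).degree = ((2 * b.natDegree + 3 : ℕ) : WithBot ℕ) := by
    rw [degree_eq_natDegree hT3ne, natDegree_mul (pow_ne_zero _ hb) hCne, natDegree_pow, hC3]
  rcases lt_or_gt_of_ne (show 2 * a.natDegree ≠ 2 * b.natDegree + 3 by omega) with hlt | hlt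
  · have hd : (a ^ 2 + a * b * (X + 1)).degree < (b ^ 2 * (X ^ 3 + X + 1)).degree := by
      apply lt_of_le_of_lt (degree_add_le _ _)
      rw [max_lt_iff, d1, d2, d3]
      constructor
      · exact_mod_cast (show 2 * a.natDegree < 2 * b.natDegree + 3 by omega)
      · exact_mod_cast (show a.natDegree + b.natDegree + 1 < 2 * b.natDegree + 3 by omega)
    have hdeg := congrArg degree h
    rw [degree_add_eq_right_of_degree_lt hd, d3, hX1d] at hdeg
    have : 2 * b.natDegree + 3 = 1 := by exact_mod_cast hdeg
    omega
  · have h' : a ^ 2 + (a * b * (X + 1) + b ^ 2 * (X ^ 3 + X + 1)) = X + 1 := by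
      linear_combination h
    have hd : (a * b * (X + 1) + b ^ 2 * (X ^ 3 + X + 1)).degree < (a ^ 2).degree := by
      apply lt_of_le_of_lt (degree_add_le _ _)
      rw [max_lt_iff, d1, d2, d3]
      constructor
      · exact_mod_cast (show a.natDegree + b.natDegree + 1 < 2 * a.natDegree by omega)
      · exact_mod_cast (show 2 * b.natDegree + 3 < 2 * a.natDegree by omega)
    have hdeg := congrArg degree h'
    rw [degree_add_eq_left_of_degree_lt hd, d1, hX1d] at hdeg
    have : 2 * a.natDegree = 1 := by exact_mod_cast hdeg
    omega

lemma dvd_norm {w : Rp} {m : Apoly} (hw : of fpoly m = w * conj w) {a b : Apoly}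
    (hdvd : (of fpoly a + of fpoly b * root fpoly) ∣ w) :
    (a ^ 2 + a * b * (X + 1) + b ^ 2 * (X ^ 3 + X + 1)) ∣ m := by
  obtain ⟨u, hu⟩ := hdvd
  obtain ⟨c, d, rfl⟩ := repr_exists u
  refine ⟨c ^ 2 + c * d * (X + 1) + d ^ 2 * (X ^ 3 + X + 1), of_inj ?_⟩
  calc of fpoly m = w * conj w := hw
    _ = ((of fpoly a + of fpoly b * root fpoly) * conj (of fpoly a + of fpoly b * root fpoly)) *
        ((of fpoly c + of fpoly d * root fpoly) * conj (of fpoly c + of fpoly d * root fpoly)) := by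
          rw [hu, map_mul]; ring
    _ = of fpoly ((a ^ 2 + a * b * (X + 1) + b ^ 2 * (X ^ 3 + X + 1)) *
        (c ^ 2 + c * d * (X + 1) + d ^ 2 * (X ^ 3 + X + 1))) := by
          rw [norm_formula, norm_formula, map_mul]

lemma key (g : Rp)
    (hspan : Ideal.span {of fpoly X + 1, root fpoly + 1} = Ideal.span {g}) : False := by
  obtain ⟨a, b, rfl⟩ := repr_exists g
  have hdvd1 : (of fpoly a + of fpoly b * root fpoly) ∣ (of fpoly X + 1) := by
    rw [← Ideal.mem_span_singleton, ← hspan]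
    exact Ideal.subset_span (by simp)
  have hdvd2 : (of fpoly a + of fpoly b * root fpoly) ∣ (root fpoly + 1) := by
    rw [← Ideal.mem_span_singleton, ← hspan]
    exact Ideal.subset_span (by simp)
  have hofX1 : of fpoly (X + 1) = of fpoly X + 1 := by rw [map_add, map_one]
  have key1 : (a ^ 2 + a * b * (X + 1) + b ^ 2 * (X ^ 3 + X + 1)) ∣ ((X + 1) * (X + 1)) := by
    refine dvd_norm ?_ (hofX1 ▸ hdvd1)
    rw [map_mul, conj_of]
  have key2 : (a ^ 2 + a * b * (X + 1) + b ^ 2 * (X ^ 3 + X + 1)) ∣ (X ^ 3 + 1) := by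
    refine dvd_norm (w := root fpoly + 1) ?_ ?_
    · have h := norm_formula 1 1
      simp only [map_one, one_mul, one_pow] at h
      rw [show (1 + (X + 1) + (X ^ 3 + X + 1) : Apoly) = X ^ 3 + 1 by
        linear_combination (X + 1) * two_eq_zero_A] at h
      rw [← h]
      ring_nf
    · simpa [add_comm] using hdvd2
  have key3 : (a ^ 2 + a * b * (X + 1) + b ^ 2 * (X ^ 3 + X + 1)) ∣ (X + 1) := by
    have hcomb : (X + 1 : Apoly) = (X ^ 3 + 1) + X * ((X + 1) * (X + 1)) := by
      linear_combination -(X ^ 3 + X ^ 2 : Apoly) * two_eq_zero_A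
    have hsum := dvd_add key2 (key1.mul_left X)
    rwa [← hcomb] at hsum
  have key4 : (X + 1 : Apoly) ∣ (a ^ 2 + a * b * (X + 1) + b ^ 2 * (X ^ 3 + X + 1)) := by
    have hg_mem : (of fpoly a + of fpoly b * root fpoly) ∈
        Ideal.span {of fpoly X + 1, root fpoly + 1} :=
      hspan ▸ Ideal.mem_span_singleton_self _
    obtain ⟨u, v, huv⟩ := Ideal.mem_span_pair.mp hg_mem
    have hg0 : evalPt (of fpoly a + of fpoly b * root fpoly) = 0 := by
      rw [← huv]
      have e1 : evalPt (of fpoly X + 1) = 0 := by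
        rw [map_add, map_one, evalPt_of]; simp; decide
      have e2 : evalPt (root fpoly + 1) = 0 := by
        rw [map_add, map_one, evalPt_root]; decide
      rw [map_add, map_mul, map_mul, e1, e2, mul_zero, mul_zero, add_zero]
    have hev : evalPt (of fpoly (a ^ 2 + a * b * (X + 1) + b ^ 2 * (X ^ 3 + X + 1))) = 0 := by
      rw [← norm_formula a b, map_mul, hg0, zero_mul]
    rw [evalPt_of] at hev
    have hdvd := dvd_iff_isRoot.mpr hev
    rw [show (X - C 1 : Apoly) = X + 1 by
      rw [map_one]; linear_combination -two_eq_zero_A] at hdvd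
    exact hdvd
  have hX1d : (X + 1 : Apoly).degree = 1 := by compute_degree!
  have hX1ne : (X + 1 : Apoly) ≠ 0 := fun hh => by simp [hh] at hX1d
  have hn0 : (a ^ 2 + a * b * (X + 1) + b ^ 2 * (X ^ 3 + X + 1)) ≠ 0 := by
    rintro h0
    exact hX1ne (zero_dvd_iff.mp (h0 ▸ key3))
  have hmonic : (a ^ 2 + a * b * (X + 1) + b ^ 2 * (X ^ 3 + X + 1)).Monic := by
    have h1 : ∀ c : Fq, c ≠ 0 → c = 1 := by decide
    exact h1 _ (leadingCoeff_ne_zero.mpr hn0)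
  have hX1monic : (X + 1 : Apoly).Monic := by
    rw [show (X + 1 : Apoly) = X + C 1 by rw [map_one]]
    exact monic_X_add_C 1
  have heq := eq_of_monic_of_associated hmonic hX1monic (associated_of_dvd_dvd key3 key4)
  exact no_solution a b heq

lemma phi_wd : (MvPolynomial.aeval ![of fpoly X, root fpoly] :
    MvPolynomial (Fin 2) Fq →ₐ[Fq] Rp) ellipticEquation = 0 := by
  simp only [ellipticEquation, map_add, map_mul, map_pow, map_one, MvPolynomial.aeval_X,
    Matrix.cons_val_zero, Matrix.cons_val_one, Matrix.head_cons]
  linear_combination rel0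

/-- The ring hom from the chart ring to `Rp`. -/
def psi : EllipticChartRing →+* Rp :=
  Ideal.Quotient.lift (Ideal.span {ellipticEquation})
    ((MvPolynomial.aeval ![of fpoly X, root fpoly] :
      MvPolynomial (Fin 2) Fq →ₐ[Fq] Rp) : MvPolynomial (Fin 2) Fq →+* Rp)
    (by
      intro p hp
      rw [Ideal.mem_span_singleton] at hp
      obtain ⟨c, rfl⟩ := hp
      rw [map_mul]
      simp only [RingHom.coe_coe]
      rw [phi_wd, zero_mul])

lemma psi_mk (p : MvPolynomial (Fin 2) Fq) :
    psi (Ideal.Quotient.mk (Ideal.span {ellipticEquation}) p) =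
      MvPolynomial.aeval ![of fpoly X, root fpoly] p :=
  Ideal.Quotient.lift_mk _ _ _

end Aux

/-- In `R = 𝔽₂[x,y]/(y² + xy + y + x³ + x + 1)`, the ideal `Q = (x+1, y+1)` is not
principal. -/
theorem ellipticChart_ideal_not_principal :
    ¬ Submodule.IsPrincipal
      (Ideal.span
        {Ideal.Quotient.mk (Ideal.span {ellipticEquation}) (MvPolynomial.X 0 + 1),
         Ideal.Quotient.mk (Ideal.span {ellipticEquation}) (MvPolynomial.X 1 + 1)}
        : Ideal EllipticChartRing) := by
  intro hP
  obtain ⟨g₀, hg₀⟩ := hP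
  apply key (psi g₀)
  have hmap := congrArg (Ideal.map psi) hg₀
  rw [Ideal.submodule_span_eq, Ideal.map_span, Ideal.map_span] at hmap
  simp only [Set.image_insert_eq, Set.image_singleton] at hmap
  erw [Set.image_pair, psi_mk, psi_mk] at hmap
  simp only [map_add, map_one, MvPolynomial.aeval_X, Matrix.cons_val_zero,
    Matrix.cons_val_one, Matrix.head_cons] at hmap
  erw [psi_mk] at hmap
  simp only [map_add, map_one, MvPolynomial.aeval_X, Matrix.cons_val_one, Matrix.head_cons] at hmap
  exact hmap
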